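/- Let G be a signed graph with a valid drawing D in the circumference. For each vertex i, let i_l⁺ and i_r⁺ denote the farthest positive neighbor (including i itself) of i in the left half and right half of D(i) respectively, and define the arc A_i from the midpoint between D(i_l⁺) and D(i) to the midpoint between D(i) and D(i_r⁺). Then for any two vertices i and j with ij a negative edge of G, the arcs A_i and A_j are disjoint. -/

import Mathlib

open Real Set

noncomputable def cmod (x : ℝ) : ℝ := x - 2 * π * ⌊x / (2 * π)⌋

noncomputable def cdist (p q : ℝ) : ℝ := min (cmod (p - q)) (cmod (q - p))

def Mr (p : ℝ) : Set ℝ := {x | ∃ t, 0 ≤ t ∧ t ≤ π ∧ x = cmod (p + t)}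
def Ml (p : ℝ) : Set ℝ := {x | ∃ t, 0 ≤ t ∧ t ≤ π ∧ x = cmod (p - t)}

structure SignedGraph (V : Type*) where
  pos : SimpleGraph V
  neg : SimpleGraph V
  disjoint : ∀ i j, ¬ (pos.Adj i j ∧ neg.Adj i j)

def IsDrawing {V : Type*} (D : V → ℝ) : Prop :=
  Function.Injective D ∧ ∀ v, D v ∈ Set.Ico (0 : ℝ) (2 * π)

def IsValidDrawing {V : Type*} (G : SignedGraph V) (D : V → ℝ) : Prop :=
  IsDrawing D ∧ ∀ i j k, G.pos.Adj i j → G.neg.Adj i k →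
    cdist (D i) (D j) < cdist (D i) (D k)

def IsAlmostValidDrawing {V : Type*} (G : SignedGraph V) (D : V → ℝ) : Prop :=
  IsDrawing D ∧ ∃ δ > 0, ∀ i j k, G.pos.Adj i j → G.neg.Adj i k →
    cdist (D i) (D j) ≤ δ ∧ δ ≤ cdist (D i) (D k)

def arcC (s ℓ : ℝ) : Set ℝ := {x | x ∈ Set.Ico (0 : ℝ) (2 * π) ∧ cmod (x - s) ≤ ℓ}

def arcGen (s ℓ : ℝ) (inl inr : Bool) : Set ℝ :=
  {x | x ∈ Set.Ico (0 : ℝ) (2 * π) ∧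
    (inl = false → 0 < cmod (x - s)) ∧
    (inr = true → cmod (x - s) ≤ ℓ) ∧ (inr = false → cmod (x - s) < ℓ)}

def IsCircularArcModel {V : Type*} (G : SimpleGraph V) (A : V → Set ℝ) : Prop :=
  (∀ v, ∃ s ℓ, 0 < ℓ ∧ ℓ < 2 * π ∧ A v = arcC s ℓ) ∧
  ∀ i j, i ≠ j → (G.Adj i j ↔ (A i ∩ A j).Nonempty)

def IsCircularArcGraph {V : Type*} (G : SimpleGraph V) : Prop :=
  ∃ A, IsCircularArcModel G A

def IsProperCircularArcGraph {V : Type*} (G : SimpleGraph V) : Prop :=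
  ∃ A : V → Set ℝ, IsCircularArcModel G A ∧ ∀ i j, ¬ A i ⊂ A j

/-- j is a positive neighbor of i, or i itself (closed positive neighborhood). -/
def posOrSelf {V : Type*} (G : SignedGraph V) (i j : V) : Prop :=
  j = i ∨ G.pos.Adj i j

/-- fl i is a farthest closed-positive neighbor of i in the left half of D i. -/
def IsFarthestLeft {V : Type*} (G : SignedGraph V) (D : V → ℝ) (fl : V → V) : Prop :=
  ∀ i, posOrSelf G i (fl i) ∧ D (fl i) ∈ Ml (D i) ∧
    ∀ j, posOrSelf G i j → D j ∈ Ml (D i) →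
      cdist (D i) (D j) ≤ cdist (D i) (D (fl i))

/-- fr i is a farthest closed-positive neighbor of i in the right half of D i. -/
def IsFarthestRight {V : Type*} (G : SignedGraph V) (D : V → ℝ) (fr : V → V) : Prop :=
  ∀ i, posOrSelf G i (fr i) ∧ D (fr i) ∈ Mr (D i) ∧
    ∀ j, posOrSelf G i j → D j ∈ Mr (D i) →
      cdist (D i) (D j) ≤ cdist (D i) (D (fr i))

/-- The arc A i, going counterclockwise from the midpoint between D (fl i) and
D i to the midpoint between D i and D (fr i) (midpoints taken along the
circle, mod 2π). -/
noncomputable def arcOf {V : Type*} (D : V → ℝ) (fl fr : V → V) (i : V) : Set ℝ :=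
  arcC (cmod (D i - cdist (D i) (D (fl i)) / 2))
    ((cdist (D i) (D (fl i)) + cdist (D i) (D (fr i))) / 2)

section AuxLemmas

private lemma tp_pos : (0:ℝ) < 2 * π := by positivity

private lemma cmod_nonneg' (x : ℝ) : 0 ≤ cmod x := by
  have h : ((⌊x / (2*π)⌋ : ℝ)) * (2*π) ≤ x := (le_div_iff₀ tp_pos).mp (Int.floor_le _)
  simp only [cmod]; linarith

private lemma cmod_lt' (x : ℝ) : cmod x < 2 * π := by
  have h : x < ((⌊x / (2*π)⌋ : ℝ) + 1) * (2*π) := (div_lt_iff₀ tp_pos).mp (Int.lt_floor_add_one _)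
  simp only [cmod]; linarith

private lemma cmod_eq_self' {x : ℝ} (h0 : 0 ≤ x) (h2 : x < 2 * π) : cmod x = x := by
  have hf : ⌊x / (2*π)⌋ = 0 := by
    rw [Int.floor_eq_zero_iff]
    constructor
    · exact div_nonneg h0 (le_of_lt tp_pos)
    · exact (div_lt_one tp_pos).mpr h2
  simp [cmod, hf]

private lemma cmod_zero' : cmod 0 = 0 := cmod_eq_self' le_rfl tp_pos

private lemma cmod_congr' {a b : ℝ} (k : ℤ) (h : a = b + 2 * π * k) : cmod a = cmod b := by
  have hne : (2 * π) ≠ 0 := ne_of_gt tp_pos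
  have hfl : ⌊a / (2*π)⌋ = ⌊b / (2*π)⌋ + k := by
    have : a / (2*π) = b / (2*π) + (k : ℝ) := by
      field_simp [h]; linarith
    rw [this, Int.floor_add_intCast]
  simp only [cmod]
  rw [hfl, h]
  push_cast; ring

private lemma cmod_sub_cmod' (a b : ℝ) : cmod (a - cmod b) = cmod (a - b) :=
  cmod_congr' ⌊b / (2*π)⌋ (by simp only [cmod]; push_cast; ring)

private lemma cmod_add_cases (a b : ℝ) :
    cmod (a + b) = cmod a + cmod b ∨ cmod (a + b) = cmod a + cmod b - 2 * π := by
  have h1 : cmod (a + b) = cmod (cmod a + cmod b) := by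
    have e1 : cmod (cmod a + cmod b) = cmod (a + cmod b) :=
      cmod_congr' (-⌊a / (2*π)⌋) (by simp only [cmod]; push_cast; ring)
    have e2 : cmod (a + cmod b) = cmod (a + b) :=
      cmod_congr' (-⌊b / (2*π)⌋) (by simp only [cmod]; push_cast; ring)
    rw [e1, e2]
  have ha0 := cmod_nonneg' a
  have hb0 := cmod_nonneg' b
  have ha2 := cmod_lt' a
  have hb2 := cmod_lt' b
  rcases lt_or_ge (cmod a + cmod b) (2 * π) with h | h
  · left; rw [h1, cmod_eq_self' (by linarith) h]
  · right
    have e3 : cmod (cmod a + cmod b) = cmod (cmod a + cmod b - 2 * π) :=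
      cmod_congr' 1 (by push_cast; ring)
    rw [h1, e3, cmod_eq_self' (by linarith) (by linarith)]

private lemma cmod_neg_add (x : ℝ) :
    cmod x + cmod (-x) = 0 ∨ cmod x + cmod (-x) = 2 * π := by
  have h := cmod_add_cases x (-x)
  have h0 : x + -x = 0 := by ring
  rw [h0, cmod_zero'] at h
  rcases h with h | h
  · left; linarith
  · right; linarith

private lemma cdist_eq' (p q : ℝ) :
    cdist p q = min (cmod (p - q)) (2 * π - cmod (p - q)) := by
  have hq : q - p = -(p - q) := by ring
  simp only [cdist, hq]
  rcases cmod_neg_add (p - q) with h | h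
  · have h1 : cmod (p - q) = 0 := le_antisymm (by linarith [cmod_nonneg' (-(p-q))]) (cmod_nonneg' _)
    have h2 : cmod (-(p - q)) = 0 := by linarith
    rw [h1, h2]
    simp [le_of_lt tp_pos]
  · have h2 : cmod (-(p - q)) = 2 * π - cmod (p - q) := by linarith
    rw [h2]

private lemma cdist_nonneg' (p q : ℝ) : 0 ≤ cdist p q :=
  le_min (cmod_nonneg' _) (cmod_nonneg' _)

private lemma cdist_symm' (p q : ℝ) : cdist p q = cdist q p := min_comm _ _

private lemma cdist_self' (p : ℝ) : cdist p p = 0 := by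
  simp [cdist, sub_self, cmod_zero']

private lemma cdist_le_pi (p q : ℝ) : cdist p q ≤ π := by
  rw [cdist_eq']
  rcases le_total (cmod (p - q)) π with h | h
  · exact le_trans (min_le_left _ _) h
  · exact le_trans (min_le_right _ _) (by linarith)

private lemma cdist_pos' {p q : ℝ} (hp : p ∈ Set.Ico (0:ℝ) (2*π))
    (hq : q ∈ Set.Ico (0:ℝ) (2*π)) (hne : p ≠ q) : 0 < cdist p q := by
  have hu0 : cmod (p - q) ≠ 0 := by
    intro h
    have hk : p - q = 2 * π * (⌊(p - q) / (2*π)⌋ : ℝ) := by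
      simp only [cmod] at h; linarith
    have hb1 : -(2*π) < p - q := by
      obtain ⟨hp1, hp2⟩ := hp; obtain ⟨hq1, hq2⟩ := hq; linarith
    have hb2 : p - q < 2*π := by
      obtain ⟨hp1, hp2⟩ := hp; obtain ⟨hq1, hq2⟩ := hq; linarith
    have hk1 : (-1 : ℝ) < (⌊(p - q) / (2*π)⌋ : ℝ) := by nlinarith [tp_pos]
    have hk2 : ((⌊(p - q) / (2*π)⌋ : ℝ)) < 1 := by nlinarith [tp_pos]
    have hk1' : (-1 : ℤ) < ⌊(p - q) / (2*π)⌋ := by exact_mod_cast hk1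
    have hk2' : ⌊(p - q) / (2*π)⌋ < 1 := by exact_mod_cast hk2
    have hk0 : ⌊(p - q) / (2*π)⌋ = 0 := by omega
    rw [hk0] at hk
    apply hne
    push_cast at hk
    linarith
  rw [cdist_eq']
  have h1 : 0 < cmod (p - q) := lt_of_le_of_ne (cmod_nonneg' _) (Ne.symm hu0)
  have h2 : cmod (p - q) < 2 * π := cmod_lt' _
  exact lt_min h1 (by linarith)

private lemma cdist_triangle' (p q r : ℝ) : cdist p r ≤ cdist p q + cdist q r := by
  rw [cdist_eq' p r, cdist_eq' p q, cdist_eq' q r]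
  set u := cmod (p - q) with hu
  set v := cmod (q - r) with hv
  have hw : cmod (p - r) = u + v ∨ cmod (p - r) = u + v - 2 * π := by
    have : p - r = (p - q) + (q - r) := by ring
    rw [this]; exact cmod_add_cases _ _
  have hu0 := cmod_nonneg' (p - q)
  have hv0 := cmod_nonneg' (q - r)
  have hu2 := cmod_lt' (p - q)
  have hv2 := cmod_lt' (q - r)
  have h1 : min (cmod (p - r)) (2*π - cmod (p - r)) ≤ cmod (p - r) := min_le_left _ _
  have h2 : min (cmod (p - r)) (2*π - cmod (p - r)) ≤ 2*π - cmod (p - r) := min_le_right _ _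
  rcases le_total u (2*π - u) with hcu | hcu <;> rcases le_total v (2*π - v) with hcv | hcv
  · rw [min_eq_left hcu, min_eq_left hcv]
    rcases hw with hw | hw <;> linarith
  · rw [min_eq_left hcu, min_eq_right hcv]
    rcases hw with hw | hw <;> linarith
  · rw [min_eq_right hcu, min_eq_left hcv]
    rcases hw with hw | hw <;> linarith
  · rw [min_eq_right hcu, min_eq_right hcv]
    rcases hw with hw | hw <;> linarith

private lemma arc_bound {V : Type*} (D : V → ℝ) (fl fr : V → V) (i : V) (x : ℝ)
    (hx : x ∈ arcOf D fl fr i) :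
    cdist (D i) x ≤ max (cdist (D i) (D (fl i))) (cdist (D i) (D (fr i))) / 2 := by
  set dl := cdist (D i) (D (fl i)) with hdl
  set dr := cdist (D i) (D (fr i)) with hdr
  have hdl0 : 0 ≤ dl := cdist_nonneg' _ _
  have hdr0 : 0 ≤ dr := cdist_nonneg' _ _
  have hdlp : dl ≤ π := cdist_le_pi _ _
  have hdrp : dr ≤ π := cdist_le_pi _ _
  have hpi := Real.pi_pos
  simp only [arcOf, arcC, Set.mem_setOf_eq, ← hdl, ← hdr] at hx
  obtain ⟨hx1, hx2⟩ := hx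
  set t := cmod (x - cmod (D i - dl / 2)) with htdef
  have ht : t = cmod (x - (D i - dl / 2)) := cmod_sub_cmod' _ _
  have ht0 : 0 ≤ t := cmod_nonneg' _
  have e1 : cmod (x - D i) = cmod (t - dl / 2) := by
    rw [ht]
    exact cmod_congr' ⌊(x - (D i - dl/2)) / (2*π)⌋
      (by simp only [cmod]; push_cast; ring)
  have e2 : cmod (D i - x) = cmod (dl / 2 - t) := by
    rw [ht]
    exact cmod_congr' (-⌊(x - (D i - dl/2)) / (2*π)⌋)
      (by simp only [cmod]; push_cast; ring)
  rcases le_total t (dl / 2) with h | h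
  · have hmem : cmod (dl / 2 - t) = dl / 2 - t :=
      cmod_eq_self' (by linarith) (by linarith)
    have : cdist (D i) x ≤ cmod (D i - x) := min_le_left _ _
    rw [e2, hmem] at this
    have : cdist (D i) x ≤ dl / 2 := by linarith
    have hmax : dl ≤ max dl dr := le_max_left _ _
    linarith
  · have hmem : cmod (t - dl / 2) = t - dl / 2 :=
      cmod_eq_self' (by linarith) (by linarith)
    have : cdist (D i) x ≤ cmod (x - D i) := min_le_right _ _
    rw [e1, hmem] at this
    have : cdist (D i) x ≤ dr / 2 := by linarith
    have hmax : dr ≤ max dl dr := le_max_right _ _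
    linarith

end AuxLemmas

/-- For a valid drawing D of a signed graph G, the arcs A_i built from the
farthest left/right positive neighbors are disjoint whenever ij is a negative
edge. -/
theorem arcs_disjoint_of_negative_edge {V : Type*} [Fintype V]
    (G : SignedGraph V) (D : V → ℝ) (hD : IsValidDrawing G D)
    (fl fr : V → V)
    (hfl : IsFarthestLeft G D fl) (hfr : IsFarthestRight G D fr) :
    ∀ i j : V, G.neg.Adj i j → arcOf D fl fr i ∩ arcOf D fl fr j = ∅ := by
  intro i j hneg
  by_contra h
  rw [← ne_eq, ← Set.nonempty_iff_ne_empty] at h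
  obtain ⟨x, hxi, hxj⟩ := h
  have hinj := hD.1.1
  have hmem := hD.1.2
  have hne : i ≠ j := hneg.ne
  have hDne : D i ≠ D j := fun hh => hne (hinj hh)
  have hd_pos : 0 < cdist (D i) (D j) := cdist_pos' (hmem i) (hmem j) hDne
  have key : ∀ a b : V, G.neg.Adj a b → ∀ c, posOrSelf G a c →
      cdist (D a) (D c) < cdist (D a) (D b) := by
    intro a b hab c hc
    rcases hc with rfl | hadj
    · rw [cdist_self']
      exact cdist_pos' (hmem _) (hmem _) (fun hh => hab.ne (hinj hh))
    · exact hD.2 a c b hadj hab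
  have h1 : cdist (D i) (D (fl i)) < cdist (D i) (D j) := key i j hneg _ (hfl i).1
  have h2 : cdist (D i) (D (fr i)) < cdist (D i) (D j) := key i j hneg _ (hfr i).1
  have h3 : cdist (D j) (D (fl j)) < cdist (D i) (D j) := by
    rw [cdist_symm' (D i) (D j)]; exact key j i hneg.symm _ (hfl j).1
  have h4 : cdist (D j) (D (fr j)) < cdist (D i) (D j) := by
    rw [cdist_symm' (D i) (D j)]; exact key j i hneg.symm _ (hfr j).1
  have hbi := arc_bound D fl fr i x hxi
  have hbj := arc_bound D fl fr j x hxj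
  have hmi : max (cdist (D i) (D (fl i))) (cdist (D i) (D (fr i))) < cdist (D i) (D j) :=
    max_lt h1 h2
  have hmj : max (cdist (D j) (D (fl j))) (cdist (D j) (D (fr j))) < cdist (D i) (D j) :=
    max_lt h3 h4
  have tri : cdist (D i) (D j) ≤ cdist (D i) x + cdist x (D j) := cdist_triangle' _ _ _
  rw [cdist_symm' x (D j)] at tri
  linarith
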